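/- Let N be a 2×2 real positive definite symmetric matrix with all entries positive. Then there exist vectors a', b' ∈ ℝ² with N = a'·a'ᵀ + b'·b'ᵀ such that all four numbers a'₁, a'₂, b'₁, b'₂ are positive. -/

import Mathlib

private lemma aux_decomp (p q r : ℝ) (hp : 0 < p) (hq : 0 < q) (hr : 0 < r)
    (hdet : 0 < p * r - q * q) :
    ∃ a0 a1 b0 b1 : ℝ, 0 < a0 ∧ 0 < a1 ∧ 0 < b0 ∧ 0 < b1 ∧
      a0 * a0 + b0 * b0 = p ∧ a0 * a1 + b0 * b1 = q ∧ a1 * a1 + b1 * b1 = r := by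
  obtain ⟨sp, hsp0, hsp2⟩ : ∃ sp : ℝ, 0 < sp ∧ sp ^ 2 = p :=
    ⟨Real.sqrt p, Real.sqrt_pos.mpr hp, Real.sq_sqrt hp.le⟩
  obtain ⟨s, hs0, hs2⟩ : ∃ s : ℝ, 0 < s ∧ s ^ 2 * p = r * p - q ^ 2 := by
    have hnum : (0:ℝ) < r * p - q ^ 2 := by nlinarith
    have hdiv : (0:ℝ) < (r * p - q ^ 2) / p := div_pos hnum hp
    refine ⟨Real.sqrt ((r * p - q ^ 2) / p), Real.sqrt_pos.mpr hdiv, ?_⟩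
    rw [Real.sq_sqrt hdiv.le]
    field_simp
  obtain ⟨w, hw0, hw⟩ : ∃ w : ℝ, 0 < w ∧ w * sp = q :=
    ⟨q / sp, by positivity, div_mul_cancel₀ q hsp0.ne'⟩
  have hw2 : w ^ 2 * p = q ^ 2 := by linear_combination (w * sp + q) * hw - w ^ 2 * hsp2
  have hr3 : s ^ 2 + w ^ 2 = r := by
    have h : (s ^ 2 + w ^ 2) * p = r * p := by linarith
    exact mul_right_cancel₀ hp.ne' h
  obtain ⟨c, hc0, hc2⟩ : ∃ c : ℝ, 0 < c ∧ c ^ 2 * (1 + (1 + s / w) ^ 2) = 1 := by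
    have hd : (0:ℝ) < 1 + (1 + s / w) ^ 2 := by positivity
    refine ⟨1 / Real.sqrt (1 + (1 + s / w) ^ 2), by positivity, ?_⟩
    rw [div_pow, one_pow, Real.sq_sqrt hd.le]
    field_simp
  obtain ⟨t, ht0, htdef⟩ : ∃ t : ℝ, 0 < t ∧ t = (1 + s / w) * c :=
    ⟨(1 + s / w) * c, by positivity, rfl⟩
  have hct : c ^ 2 + t ^ 2 = 1 := by rw [htdef]; linear_combination hc2
  have htw : t * w = c * w + c * s := by rw [htdef]; field_simp
  refine ⟨c * sp, c * w + t * s, t * sp, c * w, by positivity, by positivity,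
    by positivity, by positivity, ?_, ?_, ?_⟩
  · linear_combination sp ^ 2 * hct + hsp2
  · linear_combination (c ^ 2 + t ^ 2) * hw + q * hct - (t * sp) * htw
  · linear_combination (w ^ 2 + s ^ 2) * hct - (t * w + c * w - c * s) * htw + hr3

theorem stmt_6 (N : Matrix (Fin 2) (Fin 2) ℝ) (hsymm : N.IsSymm) (hpd : N.PosDef)
    (hpos : ∀ i j, 0 < N i j) :
    ∃ a b : Fin 2 → ℝ, N = Matrix.vecMulVec a a + Matrix.vecMulVec b b ∧
      0 < a 0 ∧ 0 < a 1 ∧ 0 < b 0 ∧ 0 < b 1 := by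
  have hsym : N 1 0 = N 0 1 := hsymm.apply 0 1
  have hdet : 0 < N 0 0 * N 1 1 - N 0 1 * N 0 1 := by
    have := hpd.det_pos
    rw [Matrix.det_fin_two, hsym] at this
    linarith
  obtain ⟨a0, a1, b0, b1, ha0, ha1, hb0, hb1, h1, h2, h3⟩ :=
    aux_decomp (N 0 0) (N 0 1) (N 1 1) (hpos 0 0) (hpos 0 1) (hpos 1 1) hdet
  refine ⟨![a0, a1], ![b0, b1], ?_, ha0, ha1, hb0, hb1⟩
  funext i j
  fin_cases i <;> fin_cases j <;>
    simp [Matrix.vecMulVec_apply, Matrix.add_apply]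
  · exact h1.symm
  · exact h2.symm
  · rw [hsym]; linarith [h2]
  · exact h3.symm
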